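/- Let ⟨Γ(w)⟩ ∈ ℤ[A, A⁻¹] be defined on LR words by ⟨Γ(ε)⟩ = -A⁴ - A⁻⁴, ⟨Γ(L)⟩ = -A⁴ + 1 + A⁻⁸, ⟨Γ(R)⟩ = A⁸ + 1 - A⁻⁴, and ⟨Γ(w ∨ w')⟩ = -A⁴⟨Γ(w)⟩ - A⁻⁴⟨Γ(w')⟩ when the rationals of w, w' are Farey neighbors (∨ being the word of their Farey sum). Then writing |w|_L and |w|_R for the number of L's and R's in w: (1) the minimum degree of ⟨Γ(w)⟩ in A is -4(|w|_L + 1) and the maximum degree is 4(|w|_R + 1); (2) every nonzero coefficient of A^{4k} in ⟨Γ(w)⟩ has sign (-1)^k. -/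

import Mathlib

/-- The two-letter alphabet of LR words. -/
inductive LR
  | L : LR
  | R : LR
  deriving DecidableEq

/-- The operation `i` on LR words: swap every L with R. -/
def iop : List LR → List LR :=
  List.map fun x => match x with | LR.L => LR.R | LR.R => LR.L

/-- `FareyPair y z x` : (y, z) are Farey neighbors p/q, r/s with q*r - p*s = 1
(positive denominators) whose mediant is x. -/
def FareyPair (y z x : ℚ) : Prop :=
  ∃ p q r s : ℤ, 0 < q ∧ 0 < s ∧ q * r - p * s = 1 ∧
    y = (p : ℚ) / q ∧ z = (r : ℚ) / s ∧ x = ((p : ℚ) + r) / ((q : ℚ) + s)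

/-- The Stern–Brocot LR-word relation: `SB α w` says that w is the LR word `w(α)`
of the rational α ∈ (0,1), for the tree rooted at 1/2.  The word of 1/2 is empty,
and for a mediant x of Farey-neighbor parents (y, z) with words w₁, w₂, the word
of x is L·w₂ if ℓ(w₁) < ℓ(w₂) and R·w₁ if ℓ(w₁) > ℓ(w₂); if the parent y (resp. z)
is the endpoint 0/1 (resp. 1/1), the word of x is L·w₂ (resp. R·w₁). -/
inductive SB : ℚ → List LR → Prop
  | half : SB (1/2) []
  | left (y z x : ℚ) (w₁ w₂ : List LR) : FareyPair y z x → SB y w₁ → SB z w₂ →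
      w₁.length < w₂.length → SB x (LR.L :: w₂)
  | right (y z x : ℚ) (w₁ w₂ : List LR) : FareyPair y z x → SB y w₁ → SB z w₂ →
      w₂.length < w₁.length → SB x (LR.R :: w₁)
  | lbase (z x : ℚ) (w₂ : List LR) : FareyPair 0 z x → SB z w₂ → SB x (LR.L :: w₂)
  | rbase (y x : ℚ) (w₁ : List LR) : FareyPair y 1 x → SB y w₁ → SB x (LR.R :: w₁)

open LaurentPolynomial

section Aux

lemma coeff_T_mul (n : ℤ) (f : LaurentPolynomial ℤ) (m : ℤ) :
    (T n * f : LaurentPolynomial ℤ).coeff m = f.coeff (m - n) := by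
  have := AddMonoidAlgebra.coeff_single_mul_apply f (1:ℤ) n m
  rw [show (T n : LaurentPolynomial ℤ) = AddMonoidAlgebra.single n 1 from rfl, this,
    one_mul, neg_add_eq_sub]

lemma coeff_one_zero : (1 : LaurentPolynomial ℤ).coeff (0:ℤ) = 1 := Finsupp.single_eq_same
lemma coeff_one_ne {m : ℤ} (h : m ≠ 0) : (1 : LaurentPolynomial ℤ).coeff m = 0 :=
  Finsupp.single_eq_of_ne' (Ne.symm h)
lemma coeff_T (n m : ℤ) : (T n : LaurentPolynomial ℤ).coeff m = if n = m then 1 else 0 :=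
  Finsupp.single_apply

lemma coeff_comb (f h : LaurentPolynomial ℤ) (m : ℤ) :
    (-T 4 * f - T (-4) * h : LaurentPolynomial ℤ).coeff m = -(f.coeff (m-4)) - h.coeff (m+4) := by
  have e1 : (-T 4 * f - T (-4) * h : LaurentPolynomial ℤ) = -(T 4 * f) - T (-4) * h := by ring
  rw [e1]
  have e2 : (-(T 4 * f) - T (-4) * h : LaurentPolynomial ℤ).coeff m
      = -((T 4 * f : LaurentPolynomial ℤ).coeff m) - (T (-4) * h : LaurentPolynomial ℤ).coeff m := rfl
  rw [e2, coeff_T_mul, coeff_T_mul]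
  ring_nf

/-- Bracket property: support in `4ℤ ∩ [-4(a+1), 4(b+1)]`, both endpoints attained,
alternating signs. -/
def Br (a b : ℤ) (f : LaurentPolynomial ℤ) : Prop :=
  f.coeff (-4*(a+1)) ≠ 0 ∧ f.coeff (4*(b+1)) ≠ 0 ∧
  (∀ n : ℤ, f.coeff n ≠ 0 → -4*(a+1) ≤ n ∧ n ≤ 4*(b+1) ∧ (4:ℤ) ∣ n) ∧
  (∀ k : ℤ, (Even k → 0 ≤ f.coeff (4*k)) ∧ (Odd k → f.coeff (4*k) ≤ 0))

lemma br_one : Br (-1) (-1) 1 := by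
  refine ⟨?_, ?_, ?_, ?_⟩
  · norm_num [coeff_one_zero]
  · norm_num [coeff_one_zero]
  · intro n hn
    by_cases h : n = 0
    · subst h; norm_num
    · exact absurd (coeff_one_ne h) hn
  · intro k
    constructor
    · intro _
      by_cases h : (4*k : ℤ) = 0
      · rw [h, coeff_one_zero]; norm_num
      · rw [coeff_one_ne h]
    · intro hk
      have h : (4*k : ℤ) ≠ 0 := by
        rcases hk with ⟨t, ht⟩; omega
      rw [coeff_one_ne h]

lemma br_half : Br 0 0 (-T 4 - T (-4) : LaurentPolynomial ℤ) := by
  have hc : ∀ m : ℤ, (-T 4 - T (-4) : LaurentPolynomial ℤ).coeff m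
      = -((T 4 : LaurentPolynomial ℤ).coeff m) - (T (-4) : LaurentPolynomial ℤ).coeff m := fun _ => rfl
  refine ⟨?_, ?_, ?_, ?_⟩
  · rw [hc]; norm_num [coeff_T]
  · rw [hc]; norm_num [coeff_T]
  · intro n hn
    rw [hc, coeff_T, coeff_T] at hn
    by_cases h4 : (4:ℤ) = n
    · subst h4; norm_num
    · by_cases hm4 : (-4:ℤ) = n
      · rw [← hm4]; norm_num
      · simp [h4, hm4] at hn
  · intro k
    rw [hc, coeff_T, coeff_T]
    constructor
    · intro hk
      have h1 : (4:ℤ) ≠ 4*k := by rcases hk with ⟨t, ht⟩; omega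
      have h2 : (-4:ℤ) ≠ 4*k := by rcases hk with ⟨t, ht⟩; omega
      simp [h1, h2]
    · intro hk
      by_cases h1 : (4:ℤ) = 4*k
      · have h2 : (-4:ℤ) ≠ 4*k := by omega
        simp [← h1, h2]
      · by_cases h2 : (-4:ℤ) = 4*k
        · simp [h1, ← h2]
        · simp [h1, h2]


lemma br_sign {a₁ b₁ a₂ b₂ : ℤ} {f h : LaurentPolynomial ℤ}
    (h₁ : Br a₁ b₁ f) (h₂ : Br a₂ b₂ h) :
    ∀ k : ℤ, (Even k → 0 ≤ (-T 4 * f - T (-4) * h : LaurentPolynomial ℤ).coeff (4*k)) ∧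
      (Odd k → (-T 4 * f - T (-4) * h : LaurentPolynomial ℤ).coeff (4*k) ≤ 0) := by
  intro k
  rw [coeff_comb]
  have e1 : (4*k - 4 : ℤ) = 4*(k-1) := by ring
  have e2 : (4*k + 4 : ℤ) = 4*(k+1) := by ring
  rw [e1, e2]
  constructor
  · intro hk
    have o1 : Odd (k-1) := by rcases hk with ⟨t, ht⟩; exact ⟨t-1, by omega⟩
    have o2 : Odd (k+1) := by rcases hk with ⟨t, ht⟩; exact ⟨t, by omega⟩
    have := (h₁.2.2.2 (k-1)).2 o1
    have := (h₂.2.2.2 (k+1)).2 o2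
    linarith
  · intro hk
    have o1 : Even (k-1) := by rcases hk with ⟨t, ht⟩; exact ⟨t, by omega⟩
    have o2 : Even (k+1) := by rcases hk with ⟨t, ht⟩; exact ⟨t+1, by omega⟩
    have := (h₁.2.2.2 (k-1)).1 o1
    have := (h₂.2.2.2 (k+1)).1 o2
    linarith

lemma br_ne_of_component {a₁ b₁ a₂ b₂ : ℤ} {f h : LaurentPolynomial ℤ}
    (h₁ : Br a₁ b₁ f) (h₂ : Br a₂ b₂ h) (k : ℤ)
    (hne : f.coeff (4*(k-1)) ≠ 0 ∨ h.coeff (4*(k+1)) ≠ 0) :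
    (-T 4 * f - T (-4) * h : LaurentPolynomial ℤ).coeff (4*k) ≠ 0 := by
  rw [coeff_comb]
  have e1 : (4*k - 4 : ℤ) = 4*(k-1) := by ring
  have e2 : (4*k + 4 : ℤ) = 4*(k+1) := by ring
  rw [e1, e2]
  rcases Int.even_or_odd k with hk | hk
  · have o1 : Odd (k-1) := by rcases hk with ⟨t, ht⟩; exact ⟨t-1, by omega⟩
    have o2 : Odd (k+1) := by rcases hk with ⟨t, ht⟩; exact ⟨t, by omega⟩
    have s1 := (h₁.2.2.2 (k-1)).2 o1
    have s2 := (h₂.2.2.2 (k+1)).2 o2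
    rcases hne with hne | hne
    · have : f.coeff (4*(k-1)) < 0 := lt_of_le_of_ne s1 hne
      omega
    · have : h.coeff (4*(k+1)) < 0 := lt_of_le_of_ne s2 hne
      omega
  · have o1 : Even (k-1) := by rcases hk with ⟨t, ht⟩; exact ⟨t, by omega⟩
    have o2 : Even (k+1) := by rcases hk with ⟨t, ht⟩; exact ⟨t+1, by omega⟩
    have s1 := (h₁.2.2.2 (k-1)).1 o1
    have s2 := (h₂.2.2.2 (k+1)).1 o2
    rcases hne with hne | hne
    · have : 0 < f.coeff (4*(k-1)) := lt_of_le_of_ne s1 (Ne.symm hne)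
      omega
    · have : 0 < h.coeff (4*(k+1)) := lt_of_le_of_ne s2 (Ne.symm hne)
      omega

lemma brL {a₁ b₁ a₂ b₂ : ℤ} {f h : LaurentPolynomial ℤ}
    (h₁ : Br a₁ b₁ f) (h₂ : Br a₂ b₂ h) (hb : b₂ = b₁ + 1) (ha : a₁ ≤ a₂ + 2) :
    Br (a₂+1) b₂ (-T 4 * f - T (-4) * h) := by
  refine ⟨?_, ?_, ?_, br_sign h₁ h₂⟩
  · have e : (-4*(a₂+1+1) : ℤ) = 4 * (-(a₂+2)) := by ring
    rw [e]
    refine br_ne_of_component h₁ h₂ _ (Or.inr ?_)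
    have e2 : (4*(-(a₂+2)+1) : ℤ) = -4*(a₂+1) := by ring
    rw [e2]; exact h₂.1
  · have e : (4*(b₂+1) : ℤ) = 4 * (b₂+1) := rfl
    refine br_ne_of_component h₁ h₂ (b₂+1) (Or.inl ?_)
    have e2 : (4*(b₂+1-1) : ℤ) = 4*(b₁+1) := by rw [hb]; ring
    rw [e2]; exact h₁.2.1
  · intro n hn
    rw [coeff_comb] at hn
    have : f.coeff (n-4) ≠ 0 ∨ h.coeff (n+4) ≠ 0 := by
      by_contra hc
      push_neg at hc
      rw [hc.1, hc.2] at hn; simp at hn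
    rcases this with hf | hh
    · obtain ⟨l1, l2, l3⟩ := h₁.2.2.1 _ hf
      refine ⟨by omega, by omega, by omega⟩
    · obtain ⟨l1, l2, l3⟩ := h₂.2.2.1 _ hh
      refine ⟨by omega, by omega, by omega⟩

lemma brR {a₁ b₁ a₂ b₂ : ℤ} {f h : LaurentPolynomial ℤ}
    (h₁ : Br a₁ b₁ f) (h₂ : Br a₂ b₂ h) (ha : a₁ = a₂ + 1) (hb : b₂ ≤ b₁ + 2) :
    Br a₁ (b₁+1) (-T 4 * f - T (-4) * h) := by
  refine ⟨?_, ?_, ?_, br_sign h₁ h₂⟩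
  · have e : (-4*(a₁+1) : ℤ) = 4 * (-(a₁+1)) := by ring
    rw [e]
    refine br_ne_of_component h₁ h₂ _ (Or.inr ?_)
    have e2 : (4*(-(a₁+1)+1) : ℤ) = -4*(a₂+1) := by rw [ha]; ring
    rw [e2]; exact h₂.1
  · refine br_ne_of_component h₁ h₂ (b₁+1+1) (Or.inl ?_)
    have e2 : (4*(b₁+1+1-1) : ℤ) = 4*(b₁+1) := by ring
    rw [e2]; exact h₁.2.1
  · intro n hn
    rw [coeff_comb] at hn
    have : f.coeff (n-4) ≠ 0 ∨ h.coeff (n+4) ≠ 0 := by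
      by_contra hc
      push_neg at hc
      rw [hc.1, hc.2] at hn; simp at hn
    rcases this with hf | hh
    · obtain ⟨l1, l2, l3⟩ := h₁.2.2.1 _ hf
      refine ⟨by omega, by omega, by omega⟩
    · obtain ⟨l1, l2, l3⟩ := h₂.2.2.1 _ hh
      refine ⟨by omega, by omega, by omega⟩


lemma num_den_eq {p q : ℤ} (hq : 0 < q) (hcop : IsCoprime p q) {x : ℚ}
    (hx : x = (p:ℚ)/q) : x.num = p ∧ (x.den:ℤ) = q := by
  have hnat : Nat.Coprime p.natAbs q.natAbs := by
    rw [Nat.coprime_iff_gcd_eq_one, ← Int.gcd]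
    exact Int.isCoprime_iff_gcd_eq_one.mp hcop
  subst hx
  exact ⟨Rat.num_div_eq_of_coprime hq hnat, by
    have := Rat.den_div_eq_of_coprime hq hnat
    omega⟩

lemma farey_num_den {y z x : ℚ} (h : FareyPair y z x) :
    (y.den:ℤ) * z.num - y.num * z.den = 1 ∧
    x.num = y.num + z.num ∧ (x.den:ℤ) = y.den + z.den := by
  obtain ⟨p, q, r, s, hq, hs, hd, hy, hz, hx⟩ := h
  have cyq : IsCoprime p q := ⟨-s, r, by linarith [hd]⟩
  have crs : IsCoprime r s := ⟨q, -p, by linarith [hd]⟩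
  have cx : IsCoprime (p+r) (q+s) := ⟨-s, r, by ring_nf; linarith [hd]⟩
  obtain ⟨hyn, hyd⟩ := num_den_eq hq cyq hy
  obtain ⟨hzn, hzd⟩ := num_den_eq hs crs hz
  have hx' : x = ((p+r : ℤ) : ℚ) / ((q+s : ℤ) : ℚ) := by push_cast; push_cast at hx; exact hx
  obtain ⟨hxn, hxd⟩ := num_den_eq (by omega) cx hx'
  refine ⟨?_, by omega, by omega⟩
  rw [hyn, hyd, hzn, hzd]
  linarith [hd]

lemma farey_between {y z x : ℚ} (h : FareyPair y z x) : y < x ∧ x < z := by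
  obtain ⟨p, q, r, s, hq, hs, hd, hy, hz, hx⟩ := h
  have hq' : (0:ℚ) < q := by exact_mod_cast hq
  have hs' : (0:ℚ) < s := by exact_mod_cast hs
  have hd' : (q:ℚ) * r - p * s = 1 := by exact_mod_cast hd
  subst hy hz hx
  constructor
  · rw [div_lt_div_iff₀ hq' (by linarith)]
    nlinarith
  · rw [div_lt_div_iff₀ (by linarith) hs']
    nlinarith

lemma rat_eq_of_num_den {y u : ℚ} (hn : y.num = u.num) (hd : (y.den:ℤ) = u.den) : y = u := by
  have : y.den = u.den := by omega
  exact Rat.ext hn this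

lemma cop_num_den (z : ℚ) : IsCoprime z.num (z.den : ℤ) := by
  rw [Int.isCoprime_iff_gcd_eq_one, Int.gcd]
  simpa using z.reduced

/-- uniqueness of left neighbors with smaller denominator -/
lemma nbr_unique_left {z y u : ℚ}
    (h1 : (y.den:ℤ) * z.num - y.num * z.den = 1)
    (h2 : (u.den:ℤ) * z.num - u.num * z.den = 1)
    (hy : (y.den:ℤ) < z.den) (hu : (u.den:ℤ) < z.den) : y = u := by
  have key : ((y.den:ℤ) - u.den) * z.num = (y.num - u.num) * z.den := by ring_nf; omega
  have hdvd : (z.den:ℤ) ∣ ((y.den:ℤ) - u.den) := by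
    have : (z.den:ℤ) ∣ ((y.den:ℤ) - u.den) * z.num := ⟨y.num - u.num, by linarith [key]⟩
    exact ((cop_num_den z).symm.dvd_of_dvd_mul_right this)
  have hden : (y.den:ℤ) = u.den := by
    have hy1 : (1:ℤ) ≤ y.den := by exact_mod_cast y.pos
    have hu1 : (1:ℤ) ≤ u.den := by exact_mod_cast u.pos
    have := Int.eq_zero_of_abs_lt_dvd hdvd (by rw [abs_lt]; constructor <;> omega)
    omega
  have hnum : y.num = u.num := by
    have h1d : (1:ℤ) ≤ z.den := by exact_mod_cast z.pos
    have hz0 : (z.den:ℤ) ≠ 0 := by omega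
    have key2 : (y.num - u.num) * z.den = 0 := by rw [← key, hden]; ring
    rcases mul_eq_zero.mp key2 with h | h
    · omega
    · exact absurd h hz0
  exact rat_eq_of_num_den hnum hden

/-- uniqueness of right neighbors with smaller denominator -/
lemma nbr_unique_right {y z v : ℚ}
    (h1 : (y.den:ℤ) * z.num - y.num * z.den = 1)
    (h2 : (y.den:ℤ) * v.num - y.num * v.den = 1)
    (hz : (z.den:ℤ) < y.den) (hv : (v.den:ℤ) < y.den) : z = v := by
  have key : (y.den:ℤ) * (z.num - v.num) = y.num * ((z.den:ℤ) - v.den) := by ring_nf; omega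
  have hdvd : (y.den:ℤ) ∣ ((z.den:ℤ) - v.den) := by
    have : (y.den:ℤ) ∣ y.num * ((z.den:ℤ) - v.den) := ⟨z.num - v.num, by linarith [key]⟩
    exact ((cop_num_den y).symm.dvd_of_dvd_mul_left this)
  have hden : (z.den:ℤ) = v.den := by
    have hz1 : (1:ℤ) ≤ z.den := by exact_mod_cast z.pos
    have hv1 : (1:ℤ) ≤ v.den := by exact_mod_cast v.pos
    have := Int.eq_zero_of_abs_lt_dvd hdvd (by rw [abs_lt]; constructor <;> omega)
    omega
  have hnum : z.num = v.num := by
    have h1d : (1:ℤ) ≤ y.den := by exact_mod_cast y.pos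
    have hy0 : (y.den:ℤ) ≠ 0 := by omega
    have key2 : (y.den:ℤ) * (z.num - v.num) = 0 := by rw [key, hden]; ring
    rcases mul_eq_zero.mp key2 with h | h
    · exact absurd h hy0
    · omega
  exact rat_eq_of_num_den hnum hden

lemma two_le_den {z : ℚ} (h0 : 0 < z) (h1 : z < 1) : 2 ≤ (z.den:ℤ) := by
  have hn : 1 ≤ z.num := by rwa [← Rat.num_pos] at h0 -- 0 < num
  have hlt : z.num < z.den := by have := Rat.num_lt_denom_iff.mpr h1; omega
  omega

lemma farey_parents_unique {y z y' z' x : ℚ}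
    (h : FareyPair y z x) (h' : FareyPair y' z' x) : y = y' ∧ z = z' := by
  obtain ⟨hn, hm, hd⟩ := farey_num_den h
  obtain ⟨hn', hm', hd'⟩ := farey_num_den h'
  -- y, y' are both left neighbors of x with den < x.den
  have l1 : (y.den:ℤ) * x.num - y.num * x.den = 1 := by
    rw [hm, hd]; linear_combination hn
  have l1' : (y'.den:ℤ) * x.num - y'.num * x.den = 1 := by
    rw [hm', hd']; linear_combination hn'
  have r1 : (x.den:ℤ) * z.num - x.num * z.den = 1 := by
    rw [hm, hd]; linear_combination hn
  have r1' : (x.den:ℤ) * z'.num - x.num * z'.den = 1 := by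
    rw [hm', hd']; linear_combination hn'
  have hz1 : (1:ℤ) ≤ z.den := by exact_mod_cast z.pos
  have hz1' : (1:ℤ) ≤ z'.den := by exact_mod_cast z'.pos
  have hy1 : (1:ℤ) ≤ y.den := by exact_mod_cast y.pos
  have hy1' : (1:ℤ) ≤ y'.den := by exact_mod_cast y'.pos
  constructor
  · exact nbr_unique_left l1 l1' (by omega) (by omega)
  · exact nbr_unique_right r1 r1' (by omega) (by omega)


lemma farey_nbrs {u v z : ℚ} (h : FareyPair u v z) :
    ((u.den:ℤ) * z.num - u.num * z.den = 1 ∧ (u.den:ℤ) < z.den) ∧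
    ((z.den:ℤ) * v.num - z.num * v.den = 1 ∧ (v.den:ℤ) < z.den) := by
  obtain ⟨hn, hm, hd⟩ := farey_num_den h
  have hv1 : (1:ℤ) ≤ v.den := by exact_mod_cast v.pos
  have hu1 : (1:ℤ) ≤ u.den := by exact_mod_cast u.pos
  refine ⟨⟨?_, by omega⟩, ⟨?_, by omega⟩⟩
  · rw [hm, hd]; linear_combination hn
  · rw [hm, hd]; linear_combination hn

lemma fp01half : FareyPair 0 1 (1/2) := by
  refine ⟨0, 1, 1, 1, by norm_num, by norm_num, by norm_num, by norm_num, by norm_num, by norm_num⟩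

end Aux

lemma sb_pos {α : ℚ} {w : List LR} (h : SB α w) : 0 < α ∧ α < 1 := by
  induction h with
  | half => norm_num
  | left y z x w₁ w₂ hp hy hz hlen ih₁ ih₂ =>
    obtain ⟨hb1, hb2⟩ := farey_between hp
    exact ⟨lt_trans ih₁.1 hb1, lt_trans hb2 ih₂.2⟩
  | right y z x w₁ w₂ hp hy hz hlen ih₁ ih₂ =>
    obtain ⟨hb1, hb2⟩ := farey_between hp
    exact ⟨lt_trans ih₁.1 hb1, lt_trans hb2 ih₂.2⟩
  | lbase z x w₂ hp hz ih₂ =>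
    obtain ⟨hb1, hb2⟩ := farey_between hp
    exact ⟨hb1, lt_trans hb2 ih₂.2⟩
  | rbase y x w₁ hp hy ih₁ =>
    obtain ⟨hb1, hb2⟩ := farey_between hp
    exact ⟨lt_trans ih₁.1 hb1, hb2⟩

/-- The full invariant carried through the induction on `SB`. -/
def SBInv (g : ℚ → LaurentPolynomial ℤ) (x : ℚ) (w : List LR) : Prop :=
  0 < x ∧ x < 1 ∧
  Br (w.count LR.L : ℤ) (w.count LR.R : ℤ) (g x) ∧
  (∃ u v : ℚ, FareyPair u v x ∧
     ((u = 0 ∧ w.count LR.R = 0) ∨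
       ∃ wu, SB u wu ∧ wu.length < w.length ∧
         wu.count LR.R + 1 = w.count LR.R ∧ wu.count LR.L ≤ w.count LR.L) ∧
     ((v = 1 ∧ w.count LR.L = 0) ∨
       ∃ wv, SB v wv ∧ wv.length < w.length ∧
         wv.count LR.L + 1 = w.count LR.L ∧ wv.count LR.R ≤ w.count LR.R)) ∧
  (∀ w', SB x w' → w' = w)

lemma main_invariant (g : ℚ → LaurentPolynomial ℤ)
    (h0 : g 0 = 1) (h1 : g 1 = 1)
    (hhalf : g (1/2) = -T 4 - T (-4))
    (hrec : ∀ x y z : ℚ, FareyPair y z x → g x = -T 4 * g y - T (-4) * g z)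
    {α : ℚ} {w : List LR} (hw : SB α w) : SBInv g α w := by
  induction hw with
  | half =>
    refine ⟨by norm_num, by norm_num, ?_, ?_, ?_⟩
    · have e1 : (([] : List LR).count LR.L : ℤ) = 0 := by simp
      have e2 : (([] : List LR).count LR.R : ℤ) = 0 := by simp
      rw [e1, e2, hhalf]; exact br_half
    · exact ⟨0, 1, fp01half, Or.inl ⟨rfl, by simp⟩, Or.inl ⟨rfl, by simp⟩⟩
    · intro w' hw'
      cases hw' with
      | half => rfl
      | left y' z' x' w₁' w₂' hp' hy' hz' hlen' =>
        have := (farey_parents_unique hp' fp01half).1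
        have := (sb_pos hy').1
        rw [‹y' = 0›] at this; exact absurd this (lt_irrefl 0)
      | right y' z' x' w₁' w₂' hp' hy' hz' hlen' =>
        have := (farey_parents_unique hp' fp01half).2
        have := (sb_pos hz').2
        rw [‹z' = 1›] at this; exact absurd this (lt_irrefl 1)
      | lbase z' x' w₂' hp' hz' =>
        have := (farey_parents_unique hp' fp01half).2
        have := (sb_pos hz').2
        rw [‹z' = 1›] at this; exact absurd this (lt_irrefl 1)
      | rbase y' x' w₁' hp' hy' =>
        have := (farey_parents_unique hp' fp01half).1
        have := (sb_pos hy').1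
        rw [‹y' = 0›] at this; exact absurd this (lt_irrefl 0)
  | left y z x w₁ w₂ hp hy hz hlen ih₁ ih₂ =>
    obtain ⟨hy0, hy1, hBr₁, ⟨u₁, v₁, hp₁, hL₁, hR₁⟩, hu₁⟩ := ih₁
    obtain ⟨hz0, hz1, hBr₂, ⟨u₂, v₂, hp₂, hL₂, hR₂⟩, hu₂⟩ := ih₂
    have hyz : (y.den:ℤ) * z.num - y.num * z.den = 1 := (farey_num_den hp).1
    have h2y := two_le_den hy0 hy1
    have h2z := two_le_den hz0 hz1
    -- establish y.den < z.den
    have hlt : (y.den:ℤ) < z.den := by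
      rcases lt_trichotomy ((y.den:ℤ)) ((z.den:ℤ)) with h | h | h
      · exact h
      · exfalso
        rw [h] at hyz
        have hdvd : (z.den:ℤ) ∣ 1 := ⟨z.num - y.num, by linear_combination -hyz⟩
        have := Int.le_of_dvd (by norm_num) hdvd
        omega
      · exfalso
        have hnb₁ := (farey_nbrs hp₁).2
        have hzv : z = v₁ := nbr_unique_right hyz hnb₁.1 h hnb₁.2
        rcases hR₁ with ⟨hv1, _⟩ | ⟨wv, hSBv, hlv, _, _⟩
        · rw [hzv, hv1] at hz1; exact absurd hz1 (lt_irrefl 1)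
        · have hwv : wv = w₂ := hu₂ wv (by rw [hzv]; exact hSBv)
          rw [hwv] at hlv; omega
    -- identify y with the canonical left parent of z
    have hnb₂ := (farey_nbrs hp₂).1
    have hyu : y = u₂ := nbr_unique_left hyz hnb₂.1 hlt hnb₂.2
    have hcnt : w₁.count LR.R + 1 = w₂.count LR.R ∧ w₁.count LR.L ≤ w₂.count LR.L := by
      rcases hL₂ with ⟨hu0, _⟩ | ⟨wu, hSBu, _, hcR, hcL⟩
      · rw [hyu, hu0] at hy0; exact absurd hy0 (lt_irrefl 0)
      · have hwu : wu = w₁ := hu₁ wu (by rw [hyu]; exact hSBu)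
        rw [hwu] at hcR hcL; exact ⟨hcR, hcL⟩
    obtain ⟨hb1, hb2⟩ := farey_between hp
    refine ⟨lt_trans hy0 hb1, lt_trans hb2 hz1, ?_, ?_, ?_⟩
    · have e1 : (((LR.L :: w₂).count LR.L : ℕ) : ℤ) = ((w₂.count LR.L : ℕ) : ℤ) + 1 := by
        simp [List.count_cons]
      have e2 : (((LR.L :: w₂).count LR.R : ℕ) : ℤ) = ((w₂.count LR.R : ℕ) : ℤ) := by
        simp [List.count_cons]
      rw [e1, e2, hrec x y z hp]
      exact brL hBr₁ hBr₂ (by omega) (by omega)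
    · refine ⟨y, z, hp, Or.inr ⟨w₁, hy, by simp; omega, by simp [List.count_cons]; omega,
        by simp [List.count_cons]; omega⟩,
        Or.inr ⟨w₂, hz, by simp, by simp [List.count_cons], by simp [List.count_cons]⟩⟩
    · intro w' hw'
      cases hw' with
      | half =>
        have := (farey_parents_unique hp fp01half).1
        rw [this] at hy0; exact absurd hy0 (lt_irrefl 0)
      | left y' z' x' w₁' w₂' hp' hy' hz' hlen' =>
        obtain ⟨e1, e2⟩ := farey_parents_unique hp' hp
        rw [hu₂ w₂' (by rw [← e2]; exact hz')]
      | right y' z' x' w₁' w₂' hp' hy' hz' hlen' =>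
        obtain ⟨e1, e2⟩ := farey_parents_unique hp' hp
        have q1 : w₁' = w₁ := hu₁ w₁' (by rw [← e1]; exact hy')
        have q2 : w₂' = w₂ := hu₂ w₂' (by rw [← e2]; exact hz')
        rw [q1, q2] at hlen'; omega
      | lbase z' x' w₂' hp' hz' =>
        have := (farey_parents_unique hp' hp).1
        rw [← this] at hy0; exact absurd hy0 (lt_irrefl 0)
      | rbase y' x' w₁' hp' hy' =>
        have := (farey_parents_unique hp' hp).2
        rw [← this] at hz1; exact absurd hz1 (lt_irrefl 1)
  | right y z x w₁ w₂ hp hy hz hlen ih₁ ih₂ =>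
    obtain ⟨hy0, hy1, hBr₁, ⟨u₁, v₁, hp₁, hL₁, hR₁⟩, hu₁⟩ := ih₁
    obtain ⟨hz0, hz1, hBr₂, ⟨u₂, v₂, hp₂, hL₂, hR₂⟩, hu₂⟩ := ih₂
    have hyz : (y.den:ℤ) * z.num - y.num * z.den = 1 := (farey_num_den hp).1
    have h2y := two_le_den hy0 hy1
    have h2z := two_le_den hz0 hz1
    -- establish z.den < y.den
    have hlt : (z.den:ℤ) < y.den := by
      rcases lt_trichotomy ((z.den:ℤ)) ((y.den:ℤ)) with h | h | h
      · exact h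
      · exfalso
        rw [← h] at hyz
        have hdvd : (z.den:ℤ) ∣ 1 := ⟨z.num - y.num, by linear_combination -hyz⟩
        have := Int.le_of_dvd (by norm_num) hdvd
        omega
      · exfalso
        have hnb₂ := (farey_nbrs hp₂).1
        have hyu : y = u₂ := nbr_unique_left hyz hnb₂.1 h hnb₂.2
        rcases hL₂ with ⟨hu0, _⟩ | ⟨wu, hSBu, hlu, _, _⟩
        · rw [hyu, hu0] at hy0; exact absurd hy0 (lt_irrefl 0)
        · have hwu : wu = w₁ := hu₁ wu (by rw [hyu]; exact hSBu)
          rw [hwu] at hlu; omega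
    -- identify z with the canonical right parent of y
    have hnb₁ := (farey_nbrs hp₁).2
    have hzv : z = v₁ := nbr_unique_right hyz hnb₁.1 hlt hnb₁.2
    have hcnt : w₂.count LR.L + 1 = w₁.count LR.L ∧ w₂.count LR.R ≤ w₁.count LR.R := by
      rcases hR₁ with ⟨hv1, _⟩ | ⟨wv, hSBv, _, hcL, hcR⟩
      · rw [hzv, hv1] at hz1; exact absurd hz1 (lt_irrefl 1)
      · have hwv : wv = w₂ := hu₂ wv (by rw [hzv]; exact hSBv)
        rw [hwv] at hcL hcR; exact ⟨hcL, hcR⟩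
    obtain ⟨hb1, hb2⟩ := farey_between hp
    refine ⟨lt_trans hy0 hb1, lt_trans hb2 hz1, ?_, ?_, ?_⟩
    · have e1 : (((LR.R :: w₁).count LR.L : ℕ) : ℤ) = ((w₁.count LR.L : ℕ) : ℤ) := by
        simp [List.count_cons]
      have e2 : (((LR.R :: w₁).count LR.R : ℕ) : ℤ) = ((w₁.count LR.R : ℕ) : ℤ) + 1 := by
        simp [List.count_cons]
      rw [e1, e2, hrec x y z hp]
      exact brR hBr₁ hBr₂ (by omega) (by omega)
    · refine ⟨y, z, hp, Or.inr ⟨w₁, hy, by simp, by simp [List.count_cons],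
        by simp [List.count_cons]⟩,
        Or.inr ⟨w₂, hz, by simp; omega, by simp [List.count_cons]; omega,
        by simp [List.count_cons]; omega⟩⟩
    · intro w' hw'
      cases hw' with
      | half =>
        have := (farey_parents_unique hp fp01half).1
        rw [this] at hy0; exact absurd hy0 (lt_irrefl 0)
      | left y' z' x' w₁' w₂' hp' hy' hz' hlen' =>
        obtain ⟨e1, e2⟩ := farey_parents_unique hp' hp
        have q1 : w₁' = w₁ := hu₁ w₁' (by rw [← e1]; exact hy')
        have q2 : w₂' = w₂ := hu₂ w₂' (by rw [← e2]; exact hz')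
        rw [q1, q2] at hlen'; omega
      | right y' z' x' w₁' w₂' hp' hy' hz' hlen' =>
        obtain ⟨e1, e2⟩ := farey_parents_unique hp' hp
        rw [hu₁ w₁' (by rw [← e1]; exact hy')]
      | lbase z' x' w₂' hp' hz' =>
        have := (farey_parents_unique hp' hp).1
        rw [← this] at hy0; exact absurd hy0 (lt_irrefl 0)
      | rbase y' x' w₁' hp' hy' =>
        have := (farey_parents_unique hp' hp).2
        rw [← this] at hz1; exact absurd hz1 (lt_irrefl 1)
  | lbase z x w₂ hp hz ih₂ =>
    obtain ⟨hz0, hz1, hBr₂, ⟨u₂, v₂, hp₂, hL₂, hR₂⟩, hu₂⟩ := ih₂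
    have hyz : ((0:ℚ).den:ℤ) * z.num - (0:ℚ).num * z.den = 1 := (farey_num_den hp).1
    have hznum : z.num = 1 := by simp at hyz; omega
    have h2z := two_le_den hz0 hz1
    have hnb₂ := (farey_nbrs hp₂).1
    have h0u : (0:ℚ) = u₂ := by
      refine nbr_unique_left hyz hnb₂.1 ?_ hnb₂.2
      simp; omega
    have hcnt : w₂.count LR.R = 0 := by
      rcases hL₂ with ⟨_, hc⟩ | ⟨wu, hSBu, _, _, _⟩
      · exact hc
      · rw [← h0u] at hSBu
        have := (sb_pos hSBu).1; exact absurd this (lt_irrefl 0)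
    obtain ⟨hb1, hb2⟩ := farey_between hp
    refine ⟨hb1, lt_trans hb2 hz1, ?_, ?_, ?_⟩
    · have e1 : (((LR.L :: w₂).count LR.L : ℕ) : ℤ) = ((w₂.count LR.L : ℕ) : ℤ) + 1 := by
        simp [List.count_cons]
      have e2 : (((LR.L :: w₂).count LR.R : ℕ) : ℤ) = ((w₂.count LR.R : ℕ) : ℤ) := by
        simp [List.count_cons]
      rw [e1, e2, hrec x 0 z hp, h0]
      exact brL br_one hBr₂ (by omega) (by omega)
    · refine ⟨0, z, hp, Or.inl ⟨rfl, by simp [List.count_cons, hcnt]⟩,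
        Or.inr ⟨w₂, hz, by simp, by simp [List.count_cons], by simp [List.count_cons]⟩⟩
    · intro w' hw'
      cases hw' with
      | half =>
        have := (farey_parents_unique hp fp01half).2
        rw [this] at hz1; exact absurd hz1 (lt_irrefl 1)
      | left y' z' x' w₁' w₂' hp' hy' hz' hlen' =>
        have := (farey_parents_unique hp' hp).1
        rw [this] at hy'
        have := (sb_pos hy').1; exact absurd this (lt_irrefl 0)
      | right y' z' x' w₁' w₂' hp' hy' hz' hlen' =>
        have := (farey_parents_unique hp' hp).1
        rw [this] at hy'
        have := (sb_pos hy').1; exact absurd this (lt_irrefl 0)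
      | lbase z' x' w₂' hp' hz' =>
        have := (farey_parents_unique hp' hp).2
        rw [hu₂ w₂' (by rw [← this]; exact hz')]
      | rbase y' x' w₁' hp' hy' =>
        have := (farey_parents_unique hp' hp).2
        rw [← this] at hz1; exact absurd hz1 (lt_irrefl 1)
  | rbase y x w₁ hp hy ih₁ =>
    obtain ⟨hy0, hy1, hBr₁, ⟨u₁, v₁, hp₁, hL₁, hR₁⟩, hu₁⟩ := ih₁
    have hyz : (y.den:ℤ) * (1:ℚ).num - y.num * (1:ℚ).den = 1 := (farey_num_den hp).1
    have h2y := two_le_den hy0 hy1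
    have hnb₁ := (farey_nbrs hp₁).2
    have h1v : (1:ℚ) = v₁ := by
      refine nbr_unique_right hyz hnb₁.1 ?_ hnb₁.2
      simp; omega
    have hcnt : w₁.count LR.L = 0 := by
      rcases hR₁ with ⟨_, hc⟩ | ⟨wv, hSBv, _, _, _⟩
      · exact hc
      · rw [← h1v] at hSBv
        have := (sb_pos hSBv).2; exact absurd this (lt_irrefl 1)
    obtain ⟨hb1, hb2⟩ := farey_between hp
    refine ⟨lt_trans hy0 hb1, hb2, ?_, ?_, ?_⟩
    · have e1 : (((LR.R :: w₁).count LR.L : ℕ) : ℤ) = ((w₁.count LR.L : ℕ) : ℤ) := by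
        simp [List.count_cons]
      have e2 : (((LR.R :: w₁).count LR.R : ℕ) : ℤ) = ((w₁.count LR.R : ℕ) : ℤ) + 1 := by
        simp [List.count_cons]
      rw [e1, e2, hrec x y 1 hp, h1]
      exact brR hBr₁ br_one (by omega) (by omega)
    · refine ⟨y, 1, hp, Or.inr ⟨w₁, hy, by simp, by simp [List.count_cons],
        by simp [List.count_cons]⟩, Or.inl ⟨rfl, by simp [List.count_cons, hcnt]⟩⟩
    · intro w' hw'
      cases hw' with
      | half =>
        have := (farey_parents_unique hp fp01half).1
        rw [this] at hy0; exact absurd hy0 (lt_irrefl 0)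
      | left y' z' x' w₁' w₂' hp' hy' hz' hlen' =>
        have := (farey_parents_unique hp' hp).2
        rw [this] at hz'
        have := (sb_pos hz').2; exact absurd this (lt_irrefl 1)
      | right y' z' x' w₁' w₂' hp' hy' hz' hlen' =>
        have := (farey_parents_unique hp' hp).2
        rw [this] at hz'
        have := (sb_pos hz').2; exact absurd this (lt_irrefl 1)
      | lbase z' x' w₂' hp' hz' =>
        have := (farey_parents_unique hp' hp).1
        rw [← this] at hy0; exact absurd hy0 (lt_irrefl 0)
      | rbase y' x' w₁' hp' hy' =>
        have := (farey_parents_unique hp' hp).1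
        rw [hu₁ w₁' (by rw [← this]; exact hy')]

open LaurentPolynomial

/-- The Kauffman bracket ⟨Γ(w)⟩ of the Conway-Coxeter frieze of an LR word w,
realized as g(α) for α the rational of w, where g = v∘φ satisfies g(0) = g(1) = 1,
the base cases ⟨Γ(ε)⟩ = g(1/2) = -A⁴ - A⁻⁴, ⟨Γ(L)⟩ = g(1/3) = -A⁴ + 1 + A⁻⁸,
⟨Γ(R)⟩ = g(2/3) = A⁸ + 1 - A⁻⁴, and the Farey-sum recursion
g(x) = -A⁴ g(y) - A⁻⁴ g(z) for parents (y,z).  Then, writing |w|_L, |w|_R for the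
numbers of L's and R's in w:
(1) the minimum degree of ⟨Γ(w)⟩ in A is -4(|w|_L + 1) and the maximum degree is
4(|w|_R + 1) (both coefficients are nonzero and all coefficients outside the range
vanish); (2) every nonzero coefficient of A^{4k} has sign (-1)^k. -/
theorem Gamma_degrees_and_signs (g : ℚ → LaurentPolynomial ℤ)
    (h0 : g 0 = 1) (h1 : g 1 = 1)
    (hhalf : g (1/2) = -T 4 - T (-4))
    (hthird : g (1/3) = -T 4 + 1 + T (-8))
    (h23 : g (2/3) = T 8 + 1 - T (-4))
    (hrec : ∀ x y z : ℚ, FareyPair y z x → g x = -T 4 * g y - T (-4) * g z)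
    (w : List LR) (α : ℚ) (hw : SB α w) :
    (g α).coeff (-4 * ((w.count LR.L : ℤ) + 1)) ≠ 0 ∧
    (g α).coeff (4 * ((w.count LR.R : ℤ) + 1)) ≠ 0 ∧
    (∀ n : ℤ, (g α).coeff n ≠ 0 →
      -4 * ((w.count LR.L : ℤ) + 1) ≤ n ∧ n ≤ 4 * ((w.count LR.R : ℤ) + 1)) ∧
    (∀ k : ℤ, (g α).coeff (4 * k) ≠ 0 →
      (Even k → 0 < (g α).coeff (4 * k)) ∧ (Odd k → (g α).coeff (4 * k) < 0)) := by
  obtain ⟨_, _, hBr, _, _⟩ := main_invariant g h0 h1 hhalf hrec hw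
  obtain ⟨e1, e2, e3, e4⟩ := hBr
  refine ⟨by exact_mod_cast e1, by exact_mod_cast e2, ?_, ?_⟩
  · intro n hn
    obtain ⟨l1, l2, _⟩ := e3 n hn
    exact ⟨l1, l2⟩
  · intro k hk
    obtain ⟨s1, s2⟩ := e4 k
    exact ⟨fun he => lt_of_le_of_ne (s1 he) (Ne.symm hk), fun ho => lt_of_le_of_ne (s2 ho) hk⟩
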